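/- For the Frobenius recursion of the equation (∂³ − W₁∂ + W₂)Φ = 0 at a regular singular point with indicial polynomial P(β) = (β−3)(β−1)(β+1) (indices −1, 1, 3) and Laurent coefficients q₁m, q₂m with q₁₀ = q₂₀ = 3: the recursion for the index β = 1 admits a solution if and only if q₁₂ − q₂₂ = (2/3)q₁₁² − q₁₁q₂₁ + (1/3)q₂₁². -/
import Mathlib

noncomputable def PhiAux (q₁ q₂ : ℕ → ℂ) (P : ℂ → ℂ) : ℕ → ℂ
  | 0 => 1
  | r + 1 =>
    if r + 1 = 2 then 0 else
      (∑ m ∈ (Finset.Icc 1 (r + 1)).attach,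
        (q₁ m.1 * PhiAux q₁ q₂ P (r + 1 - m.1) * ((1 : ℂ) + (r + 1 : ℕ) - m.1)
          - q₂ m.1 * PhiAux q₁ q₂ P (r + 1 - m.1))) / P (1 + (r + 1 : ℕ))
  termination_by r => r
  decreasing_by
    have hm := m.2
    simp only [Finset.mem_Icc] at hm
    omega

lemma PhiAux_zero (q₁ q₂ : ℕ → ℂ) (P : ℂ → ℂ) : PhiAux q₁ q₂ P 0 = 1 := by
  rw [PhiAux]

lemma PhiAux_succ (q₁ q₂ : ℕ → ℂ) (P : ℂ → ℂ) (r : ℕ) :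
    PhiAux q₁ q₂ P (r + 1) =
      if r + 1 = 2 then 0 else
        (∑ m ∈ Finset.Icc 1 (r + 1),
          (q₁ m * PhiAux q₁ q₂ P (r + 1 - m) * ((1 : ℂ) + (r + 1 : ℕ) - m)
            - q₂ m * PhiAux q₁ q₂ P (r + 1 - m))) / P (1 + (r + 1 : ℕ)) := by
  rw [PhiAux]
  congr 1
  rw [← Finset.sum_attach (Finset.Icc 1 (r + 1))]

/-- For the Frobenius recursion at index β = 1 of a third order equation with
indicial polynomial P(β) = (β−3)(β−1)(β+1) and Laurent coefficients q₁ₘ, q₂ₘ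
(q₁₀ = q₂₀ = 3), a solution of the recursion exists if and only if
q₁₂ − q₂₂ = (2/3)q₁₁² − q₁₁q₂₁ + (1/3)q₂₁². -/
theorem frobenius_index_one_solvability
    (q₁ q₂ : ℕ → ℂ) (hq₁0 : q₁ 0 = 3) (hq₂0 : q₂ 0 = 3)
    (P : ℂ → ℂ) (hP : ∀ β : ℂ, P β = (β - 3) * (β - 1) * (β + 1)) :
    (∃ Φ : ℕ → ℂ, Φ 0 = 1 ∧
        ∀ r : ℕ, 1 ≤ r →
          P (1 + r) * Φ r =
            ∑ m ∈ Finset.Icc 1 r,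
              (q₁ m * Φ (r - m) * ((1 : ℂ) + r - m) - q₂ m * Φ (r - m)))
    ↔ q₁ 2 - q₂ 2 = (2/3) * (q₁ 1)^2 - q₁ 1 * q₂ 1 + (1/3) * (q₂ 1)^2 := by
  have hP2 : P 2 = -3 := by rw [hP]; ring
  have hP3 : P 3 = 0 := by rw [hP]; ring
  have e1 : Finset.Icc 1 1 = {1} := Finset.Icc_self 1
  have e2 : Finset.Icc (1:ℕ) 2 = {1, 2} := rfl
  constructor
  · rintro ⟨Φ, hΦ0, hrec⟩
    have h1 := hrec 1 le_rfl
    have h2 := hrec 2 (by norm_num)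
    simp only [e1, e2, Finset.sum_singleton,
      Finset.sum_insert (by decide : (1:ℕ) ∉ ({2} : Finset ℕ))] at h1 h2
    norm_num [hΦ0] at h1 h2
    rw [hP2] at h1
    rw [hP3] at h2
    linear_combination -h2 + ((2 * q₁ 1 - q₂ 1) / 3) * h1
  · intro h
    refine ⟨PhiAux q₁ q₂ P, PhiAux_zero q₁ q₂ P, ?_⟩
    intro r hr
    have hΦ1 : PhiAux q₁ q₂ P 1 = (q₁ 1 - q₂ 1) / (-3) := by
      have := PhiAux_succ q₁ q₂ P 0
      norm_num [e1, PhiAux_zero, hP2] at this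
      exact this
    by_cases hr2 : r = 2
    · subst hr2
      have h0 : P (1 + ((2:ℕ):ℂ)) = 0 := by norm_num [hP3]
      rw [h0, zero_mul]
      simp only [e2, Finset.sum_insert (by decide : (1:ℕ) ∉ ({2} : Finset ℕ)),
        Finset.sum_singleton]
      norm_num [hΦ1, PhiAux_zero]
      linear_combination -h
    · obtain ⟨s, rfl⟩ : ∃ s, r = s + 1 := ⟨r - 1, by omega⟩
      have hne : P (1 + ((s + 1 : ℕ) : ℂ)) ≠ 0 := by
        rw [hP]
        have c1 : (1:ℂ) + ((s + 1 : ℕ) : ℂ) - 3 ≠ 0 := by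
          have : (1:ℂ) + ((s + 1 : ℕ) : ℂ) - 3 = ((s + 1 : ℕ) : ℂ) - ((2:ℕ):ℂ) := by
            push_cast; ring
          rw [this, sub_ne_zero]
          exact fun hc => hr2 (Nat.cast_injective hc)
        have c2 : (1:ℂ) + ((s + 1 : ℕ) : ℂ) - 1 ≠ 0 := by
          have : (1:ℂ) + ((s + 1 : ℕ) : ℂ) - 1 = ((s + 1 : ℕ) : ℂ) := by ring
          rw [this, Nat.cast_ne_zero]
          omega
        have c3 : (1:ℂ) + ((s + 1 : ℕ) : ℂ) + 1 ≠ 0 := by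
          have : (1:ℂ) + ((s + 1 : ℕ) : ℂ) + 1 = ((s + 3 : ℕ) : ℂ) := by
            push_cast; ring
          rw [this, Nat.cast_ne_zero]
          omega
        exact mul_ne_zero (mul_ne_zero c1 c2) c3
      rw [PhiAux_succ, if_neg hr2]
      rw [mul_div_cancel₀ _ hne]
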